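/- Let H be a Hadamard matrix of order n, i.e., an n × n {+1,-1}-matrix with H·Hᵀ = n·I, and let m be an integer with n ≥ m > 1. Then the sum of det(M)² over all m × m submatrices M of H equals exactly n^m · C(n,m); equivalently, the mean of det(M)² over all C(n,m)² submatrices of order m is n^m / C(n,m). -/
import Mathlib

open Matrix Finset Equiv

section CauchyBinet

variable {R : Type*} [CommRing R] {m n : ℕ}

private lemma det_AB_expand (A : Matrix (Fin m) (Fin n) R) (B : Matrix (Fin n) (Fin m) R) :
    det (A * B) = ∑ p : Fin m → Fin n,
      det (A.submatrix id p) * ∏ i, B (p i) i := by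
  simp only [det_apply', mul_apply, Finset.prod_univ_sum, Finset.mul_sum,
    Fintype.piFinset_univ]
  rw [Finset.sum_comm]
  refine Finset.sum_congr rfl fun p _ => ?_
  rw [Finset.sum_mul]
  refine Finset.sum_congr rfl fun σ _ => ?_
  simp only [submatrix_apply, id_eq, Finset.prod_mul_distrib]
  ring

private noncomputable def strictMonoPermEquiv (m n : ℕ) :
    ({f : Fin m → Fin n // StrictMono f} × Equiv.Perm (Fin m)) ≃
      {p : Fin m → Fin n // Function.Injective p} :=
  Equiv.ofBijective
    (fun x => ⟨x.1.1 ∘ x.2, x.1.2.injective.comp x.2.injective⟩)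
    (by
      constructor
      · rintro ⟨⟨f, hf⟩, τ⟩ ⟨⟨g, hg⟩, υ⟩ h
        simp only [Subtype.mk.injEq] at h
        haveI : WellFoundedLT (Fin m) := Finite.to_wellFoundedLT
        have hr : Set.range f = Set.range g := by
          rw [← τ.surjective.range_comp f, ← υ.surjective.range_comp g, h]
        have hfg : f = g := (hf.range_inj hg).mp hr
        subst hfg
        have hτ : τ = υ := Equiv.ext fun i => hf.injective (congrFun h i)
        rw [hτ]
      · rintro ⟨p, hp⟩
        set s : Finset (Fin n) := Finset.image p Finset.univ with hs
        have hcard : s.card = m := by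
          rw [hs, Finset.card_image_of_injective _ hp, Finset.card_univ, Fintype.card_fin]
        have hmem : ∀ i, p i ∈ s := fun i => Finset.mem_image_of_mem _ (Finset.mem_univ i)
        set g : Fin m → Fin m := fun i => (s.orderIsoOfFin hcard).symm ⟨p i, hmem i⟩ with hg
        have hginj : Function.Injective g := by
          intro i j hij
          have h2 : (⟨p i, hmem i⟩ : s) = ⟨p j, hmem j⟩ :=
            (s.orderIsoOfFin hcard).symm.injective hij
          exact hp (congrArg Subtype.val h2)
        have hgbij : Function.Bijective g := (Finite.injective_iff_bijective).mp hginj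
        refine ⟨⟨⟨s.orderEmbOfFin hcard, (s.orderEmbOfFin hcard).strictMono⟩,
          Equiv.ofBijective g hgbij⟩, ?_⟩
        apply Subtype.ext
        funext i
        show (s.orderEmbOfFin hcard) (g i) = p i
        rw [← Finset.coe_orderIsoOfFin_apply, hg]
        simp)

/-- Cauchy–Binet formula. -/
private lemma det_mul_eq_sum_strictMono (A : Matrix (Fin m) (Fin n) R)
    (B : Matrix (Fin n) (Fin m) R) :
    det (A * B) = ∑ f : {f : Fin m → Fin n // StrictMono f},
      det (A.submatrix id f.1) * det (B.submatrix f.1 id) := by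
  rw [det_AB_expand]
  have h0 : ∀ p : Fin m → Fin n, ¬ Function.Injective p →
      det (A.submatrix id p) * ∏ i, B (p i) i = 0 := by
    intro p hp
    obtain ⟨i, j, hij, hne⟩ : ∃ i j, p i = p j ∧ i ≠ j := by
      rw [Function.Injective] at hp
      push_neg at hp
      exact hp
    rw [Matrix.det_zero_of_column_eq hne (fun k => by simp [hij]), zero_mul]
  calc ∑ p : Fin m → Fin n, det (A.submatrix id p) * ∏ i, B (p i) i
      = ∑ p : {p : Fin m → Fin n // Function.Injective p},
          det (A.submatrix id p.1) * ∏ i, B (p.1 i) i := by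
        rw [← Finset.sum_subtype (Finset.univ.filter (fun p : Fin m → Fin n => Function.Injective p))
          (by simp) (fun p => det (A.submatrix id p) * ∏ i, B (p i) i)]
        refine (Finset.sum_subset (Finset.filter_subset _ _) fun p _ hp => ?_).symm
        exact h0 p (by simpa using hp)
    _ = ∑ x : {f : Fin m → Fin n // StrictMono f} × Equiv.Perm (Fin m),
          det (A.submatrix id (x.1.1 ∘ x.2)) * ∏ i, B (x.1.1 (x.2 i)) i := by
        rw [← Equiv.sum_comp (strictMonoPermEquiv m n)
          (fun p : {p : Fin m → Fin n // Function.Injective p} =>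
            det (A.submatrix id p.1) * ∏ i, B (p.1 i) i)]
        rfl
    _ = ∑ f : {f : Fin m → Fin n // StrictMono f}, ∑ τ : Equiv.Perm (Fin m),
          det (A.submatrix id (f.1 ∘ τ)) * ∏ i, B (f.1 (τ i)) i := by
        rw [Fintype.sum_prod_type]
    _ = _ := by
        refine Finset.sum_congr rfl fun f _ => ?_
        have key : ∀ τ : Equiv.Perm (Fin m),
            det (A.submatrix id (f.1 ∘ τ)) = (Equiv.Perm.sign τ : ℤ) * det (A.submatrix id f.1) := by
          intro τ
          have : A.submatrix id (f.1 ∘ τ) = (A.submatrix id f.1).submatrix id τ := by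
            simp [Matrix.submatrix_submatrix]
          rw [this, Matrix.det_permute']
        simp only [key]
        rw [Matrix.det_apply' (B.submatrix f.1 id), Finset.mul_sum]
        refine Finset.sum_congr rfl fun τ _ => ?_
        simp only [submatrix_apply, id_eq]
        ring

end CauchyBinet

private lemma card_strictMono_subtype (m n : ℕ) :
    Fintype.card {f : Fin m → Fin n // StrictMono f} = n.choose m := by
  have e : {f : Fin m → Fin n // StrictMono f} ≃ {s : Finset (Fin n) // s.card = m} :=
    { toFun := fun f => ⟨Finset.image f.1 Finset.univ, by
        rw [Finset.card_image_of_injective _ f.2.injective, Finset.card_univ, Fintype.card_fin]⟩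
      invFun := fun s => ⟨s.1.orderEmbOfFin s.2, (s.1.orderEmbOfFin s.2).strictMono⟩
      left_inv := by
        rintro ⟨f, hf⟩
        apply Subtype.ext
        funext i
        show ((Finset.image f Finset.univ).orderEmbOfFin _) i = f i
        exact congrFun (Finset.orderEmbOfFin_unique _
          (fun x => Finset.mem_image_of_mem _ (Finset.mem_univ x)) hf).symm i
      right_inv := by
        rintro ⟨s, hs⟩
        ext x
        simp only [Finset.mem_image, Finset.mem_univ, true_and]
        constructor
        · rintro ⟨i, rfl⟩
          exact Finset.orderEmbOfFin_mem s hs i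
        · intro hx
          have : x ∈ Set.range (s.orderEmbOfFin hs) := by
            rw [Finset.range_orderEmbOfFin]
            exact hx
          obtain ⟨i, hi⟩ := this
          exact ⟨i, hi⟩ }
  rw [Fintype.card_congr e, Fintype.card_finset_len, Fintype.card_fin]

open Matrix
/-- For a Hadamard matrix `H` of order `n` (an `n × n` `{±1}`-matrix with
`H * Hᵀ = n • 1`) and `n ≥ m > 1`, the sum of squared minors of order `m`
(over all pairs of strictly monotone index maps `Fin m → Fin n`)
equals exactly `n^m * C(n,m)`. -/
theorem sum_sq_minors_hadamard (n m : ℕ) (hm : 1 < m) (hmn : m ≤ n)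
    (H : Matrix (Fin n) (Fin n) ℤ) (hH1 : ∀ i j, H i j = 1 ∨ H i j = -1)
    (hH : H * Hᵀ = (n : ℤ) • (1 : Matrix (Fin n) (Fin n) ℤ)) :
    ∑ f : {f : Fin m → Fin n // StrictMono f},
      ∑ g : {g : Fin m → Fin n // StrictMono g},
        (H.submatrix f.1 g.1).det ^ 2 = (n : ℤ) ^ m * (n.choose m : ℤ) := by
  have key : ∀ f : {f : Fin m → Fin n // StrictMono f},
      ∑ g : {g : Fin m → Fin n // StrictMono g},
        (H.submatrix f.1 g.1).det ^ 2 = (n : ℤ) ^ m := by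
    intro f
    set A : Matrix (Fin m) (Fin n) ℤ := H.submatrix f.1 id with hA
    have hAB : A * Aᵀ = (n : ℤ) • (1 : Matrix (Fin m) (Fin m) ℤ) := by
      ext i j
      have : (A * Aᵀ) i j = (H * Hᵀ) (f.1 i) (f.1 j) := by
        simp [hA, Matrix.mul_apply]
      rw [this, hH]
      simp [Matrix.one_apply, f.2.injective.eq_iff]
    have hdet : det (A * Aᵀ) = (n : ℤ) ^ m := by
      rw [hAB, Matrix.det_smul, Matrix.det_one, mul_one, Fintype.card_fin]
    rw [← hdet, det_mul_eq_sum_strictMono]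
    refine Finset.sum_congr rfl fun g _ => ?_
    have h1 : A.submatrix id g.1 = H.submatrix f.1 g.1 := by
      simp [hA, Matrix.submatrix_submatrix]
    have h2 : Aᵀ.submatrix g.1 id = (H.submatrix f.1 g.1)ᵀ := by
      rw [← Matrix.transpose_submatrix, h1]
    rw [h1, h2, Matrix.det_transpose, sq]
  rw [Finset.sum_congr rfl (fun f _ => key f), Finset.sum_const, card_univ,
    card_strictMono_subtype, nsmul_eq_mul, mul_comm]
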